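/- arXiv:2602.17978 — 4 statements merged into one kernel-verified Lean document; each statement's English description precedes it below -/
import Mathlib

section
/- The score function ψ(D; f, (s,g)) = (s(C) − g(f,C))² obeys the Neyman orthogonality conditions at (f₀, (s₀, g₀)): (i) E[(s₀(C) − g₀(f₀, C))²] = 0, since s₀(C) = E[Y|C] = E[f₀(X)|C] = g₀(f₀, C) almost surely; and (ii) for all square-integrable perturbations s : 𝒞 → ℝ and g, the Gateaux derivative at r = 0 of the map r ↦ E[(s₀(C) + r·s(C) − g₀(f₀, C) − r·g(f₀, C))²] equals 0. -/
open MeasureTheory ProbabilityTheory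

/-- **Neyman orthogonality of the DML-CMR score.**
Let `s₀(C) = E[Y | C]` and `g₀(f₀, C) = E[f₀(X) | C]` (conditioning on `C` is modelled by
the sub-σ-algebra `m` it generates), and suppose the conditional moment restriction
`E[Y − f₀(X) | C] = 0` holds almost surely.  Then the score
`ψ(D; f, (s,g)) = (s(C) − g(f,C))²` obeys the Neyman orthogonality conditions at
`(f₀, (s₀, g₀))`: (i) `E[(s₀(C) − g₀(f₀,C))²] = 0`, and (ii) for every square-integrable
(`m`-measurable) perturbation pair `(s, g)`, the Gateaux derivative at `r = 0` of
`r ↦ E[(s₀(C) + r·s(C) − g₀(f₀,C) − r·g(C))²]` equals `0`. -/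
theorem neyman_orthogonality_of_dml_cmr_score
    {Ω : Type*} {m0 : MeasurableSpace Ω} (μ : Measure Ω) [IsProbabilityMeasure μ]
    {𝒳 : Type*} [MeasurableSpace 𝒳]
    (m : MeasurableSpace Ω) (hm : m ≤ m0)
    (Y : Ω → ℝ) (X : Ω → 𝒳) (f₀ : 𝒳 → ℝ)
    (hY : MemLp Y 2 μ) (hf₀X : MemLp (fun ω => f₀ (X ω)) 2 μ)
    (hCMR : μ[(fun ω => Y ω - f₀ (X ω))|m] =ᵐ[μ] 0) :
    (∫ ω, ((μ[Y|m]) ω - (μ[(fun ω' => f₀ (X ω'))|m]) ω) ^ 2 ∂μ = 0) ∧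
    (∀ s g : Ω → ℝ, Measurable[m] s → Measurable[m] g →
      MemLp s 2 μ → MemLp g 2 μ →
      HasDerivAt
        (fun r : ℝ => ∫ ω,
          ((μ[Y|m]) ω + r * s ω - (μ[(fun ω' => f₀ (X ω'))|m]) ω - r * g ω) ^ 2 ∂μ)
        0 0) := by

  have hYint : Integrable Y μ := hY.integrable one_le_two
  have hfint : Integrable (fun ω => f₀ (X ω)) μ := hf₀X.integrable one_le_two
  have hsub : μ[(fun ω => Y ω - f₀ (X ω))|m] =ᵐ[μ]
      fun ω => (μ[Y|m]) ω - (μ[(fun ω' => f₀ (X ω'))|m]) ω := by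
    exact condExp_sub (m := m) (μ := μ) hYint hfint
  have hzero : (fun ω => (μ[Y|m]) ω - (μ[(fun ω' => f₀ (X ω'))|m]) ω) =ᵐ[μ] 0 :=
    hsub.symm.trans hCMR
  constructor
  · have : (fun ω => ((μ[Y|m]) ω - (μ[(fun ω' => f₀ (X ω'))|m]) ω) ^ 2) =ᵐ[μ]
        (fun _ => (0 : ℝ)) := by
      filter_upwards [hzero] with ω hω
      simp only [Pi.zero_apply] at hω
      simp [hω]
    rw [integral_congr_ae this, integral_const]; simp
  · intro s g hs hg hsL hgL
    have key : (fun r : ℝ => ∫ ω,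
          ((μ[Y|m]) ω + r * s ω - (μ[(fun ω' => f₀ (X ω'))|m]) ω - r * g ω) ^ 2 ∂μ)
        = fun r : ℝ => (∫ ω, (s ω - g ω) ^ 2 ∂μ) * r ^ 2 := by
      funext r
      have heq : (fun ω =>
          ((μ[Y|m]) ω + r * s ω - (μ[(fun ω' => f₀ (X ω'))|m]) ω - r * g ω) ^ 2)
          =ᵐ[μ] fun ω => r ^ 2 * (s ω - g ω) ^ 2 := by
        filter_upwards [hzero] with ω hω
        simp only [Pi.zero_apply] at hω
        have : (μ[Y|m]) ω = (μ[(fun ω' => f₀ (X ω'))|m]) ω := by linarith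
        rw [this]; ring
      rw [integral_congr_ae heq, integral_const_mul, mul_comm]
    rw [key]
    have h := (hasDerivAt_pow 2 (0 : ℝ)).const_mul (∫ ω, (s ω - g ω) ^ 2 ∂μ)
    simpa using h
end

section
/- The score function of standard two-stage CMR estimators, ℓ(f, g) = (Y − g(f, C))², is not Neyman orthogonal at the true parameters (f₀, g₀). Precisely: (i) E[(Y − g₀(f₀, C))²] = E[(Y − E[Y|C])²], which is strictly positive whenever Y is not almost surely equal to E[Y|C], so the requirement that the score have zero expectation at the true parameters fails; and (ii) for any square-integrable perturbation g : 𝒞 → ℝ, the Gateaux derivative at r = 0 of the map r ↦ E[(Y − g₀(f₀, C) − r·g(C))²] equals −2·E[(Y − E[Y|C])·g(C)], which is nonzero for general g. -/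
open MeasureTheory ProbabilityTheory

/-- The conditional expectation of an `L²` function (w.r.t. a finite measure) is in `L²`. -/
lemma memℒp_two_condexp_aux {Ω : Type*} {m0 : MeasurableSpace Ω} (μ : Measure Ω)
    [IsProbabilityMeasure μ] (m : MeasurableSpace Ω) (hm : m ≤ m0)
    (f : Ω → ℝ) (hf : MemLp f 2 μ) : MemLp (μ[f|m]) 2 μ := by
  have hfi : Integrable f μ := hf.integrable one_le_two
  set fL : Lp ℝ 2 μ := hf.toLp f with hfL
  have hcond : (condExpL2 ℝ ℝ hm fL : Ω → ℝ) =ᵐ[μ] μ[f|m] := by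
    refine ae_eq_condExp_of_forall_setIntegral_eq hm hfi ?_ ?_ ?_
    · intro s hs hμs
      exact integrableOn_condExpL2_of_measure_ne_top hm hμs.ne fL
    · intro s hs hμs
      rw [integral_condExpL2_eq hm fL hs hμs.ne]
      exact integral_congr_ae (ae_restrict_of_ae hf.coeFn_toLp)
    · exact aestronglyMeasurable_condExpL2 hm fL
  exact (Lp.memLp _).ae_eq hcond

/-- **The standard two-stage CMR score is not Neyman orthogonal.**
Let `g₀(f₀, C) = E[f₀(X) | C]` (conditioning on `C` is modelled by the sub-σ-algebra `m`
it generates), and suppose the conditional moment restriction `E[Y − f₀(X) | C] = 0` holds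
almost surely.  Then for the standard two-stage score `ℓ(f,g) = (Y − g(f,C))²`:
(i) `E[(Y − g₀(f₀,C))²] = E[(Y − E[Y|C])²]`, which is strictly positive whenever `Y` is
not almost surely equal to `E[Y|C]`, so the zero-expectation requirement at the true
parameters fails; and (ii) for every square-integrable (`m`-measurable) perturbation `g`,
the Gateaux derivative at `r = 0` of `r ↦ E[(Y − g₀(f₀,C) − r·g(C))²]` equals
`−2·E[(Y − E[Y|C])·g(C)]`. -/
theorem standard_two_stage_score_not_neyman_orthogonal
    {Ω : Type*} {m0 : MeasurableSpace Ω} (μ : Measure Ω) [IsProbabilityMeasure μ]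
    {𝒳 : Type*} [MeasurableSpace 𝒳]
    (m : MeasurableSpace Ω) (hm : m ≤ m0)
    (Y : Ω → ℝ) (X : Ω → 𝒳) (f₀ : 𝒳 → ℝ)
    (hY : MemLp Y 2 μ) (hf₀X : MemLp (fun ω => f₀ (X ω)) 2 μ)
    (hCMR : μ[(fun ω => Y ω - f₀ (X ω))|m] =ᵐ[μ] 0) :
    (∫ ω, (Y ω - (μ[(fun ω' => f₀ (X ω'))|m]) ω) ^ 2 ∂μ
        = ∫ ω, (Y ω - (μ[Y|m]) ω) ^ 2 ∂μ) ∧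
    (¬ (Y =ᵐ[μ] μ[Y|m]) →
      0 < ∫ ω, (Y ω - (μ[(fun ω' => f₀ (X ω'))|m]) ω) ^ 2 ∂μ) ∧
    (∀ g : Ω → ℝ, Measurable[m] g → MemLp g 2 μ →
      HasDerivAt
        (fun r : ℝ => ∫ ω, (Y ω - (μ[(fun ω' => f₀ (X ω'))|m]) ω - r * g ω) ^ 2 ∂μ)
        (-2 * ∫ ω, (Y ω - (μ[Y|m]) ω) * g ω ∂μ) 0) := by
  have hYint : Integrable Y μ := hY.integrable one_le_two
  have hfint : Integrable (fun ω => f₀ (X ω)) μ := hf₀X.integrable one_le_two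
  -- E[f₀X|m] =ᵐ E[Y|m]
  have hsub : μ[(fun ω => Y ω - f₀ (X ω))|m]
      =ᵐ[μ] μ[Y|m] - μ[(fun ω' => f₀ (X ω'))|m] := condExp_sub hYint hfint m
  have hEq : μ[(fun ω' => f₀ (X ω'))|m] =ᵐ[μ] μ[Y|m] := by
    filter_upwards [hsub, hCMR] with ω h1 h2
    rw [h2] at h1
    have h1' : (0 : ℝ) = (μ[Y|m]) ω - (μ[(fun ω' => f₀ (X ω'))|m]) ω := h1
    linarith
  have hEm : MemLp (μ[(fun ω' => f₀ (X ω'))|m]) 2 μ :=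
    memℒp_two_condexp_aux μ m hm _ hf₀X
  have hZ : MemLp (fun ω => Y ω - (μ[(fun ω' => f₀ (X ω'))|m]) ω) 2 μ := hY.sub hEm
  have hZ2 : Integrable (fun ω => (Y ω - (μ[(fun ω' => f₀ (X ω'))|m]) ω) ^ 2) μ := by
    simpa [sq] using hZ.integrable_sq
  have hi : ∀ᵐ ω ∂μ, (Y ω - (μ[(fun ω' => f₀ (X ω'))|m]) ω) ^ 2
      = (Y ω - (μ[Y|m]) ω) ^ 2 := by
    filter_upwards [hEq] with ω h; rw [h]
  refine ⟨integral_congr_ae hi, ?_, ?_⟩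
  · intro hne
    rcases (integral_nonneg (f := fun ω => (Y ω - (μ[(fun ω' => f₀ (X ω'))|m]) ω) ^ 2) (fun ω => sq_nonneg _)).lt_or_eq with h | h
    · exact h
    · exfalso
      have h0 : (fun ω => (Y ω - (μ[(fun ω' => f₀ (X ω'))|m]) ω) ^ 2) =ᵐ[μ] 0 :=
        (integral_eq_zero_iff_of_nonneg (fun ω => sq_nonneg _) hZ2).mp h.symm
      apply hne
      filter_upwards [h0, hEq] with ω h1 h2
      have h3 : Y ω - (μ[(fun ω' => f₀ (X ω'))|m]) ω = 0 :=
        pow_eq_zero_iff (n := 2) (by norm_num) |>.mp h1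
      rw [← h2]; linarith
  · intro g _ hg
    set Z : Ω → ℝ := fun ω => Y ω - (μ[(fun ω' => f₀ (X ω'))|m]) ω with hZdef
    have hZg : Integrable (fun ω => Z ω * g ω) μ := by
      have h := hg.smul (φ := Z) (p := 2) (q := 2) (r := 1) hZ
      exact h.integrable le_rfl
    have hg2 : Integrable (fun ω => g ω ^ 2) μ := by simpa [sq] using hg.integrable_sq
    have hfun : (fun r : ℝ => ∫ ω, (Y ω - (μ[(fun ω' => f₀ (X ω'))|m]) ω - r * g ω) ^ 2 ∂μ)
        = fun r : ℝ => (∫ ω, Z ω ^ 2 ∂μ) - (2 * r) * (∫ ω, Z ω * g ω ∂μ)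
            + r ^ 2 * (∫ ω, g ω ^ 2 ∂μ) := by
      funext r
      have expand : (fun ω => (Y ω - (μ[(fun ω' => f₀ (X ω'))|m]) ω - r * g ω) ^ 2)
          = fun ω => (Z ω ^ 2 - (2 * r) * (Z ω * g ω)) + r ^ 2 * g ω ^ 2 := by
        funext ω; simp only [hZdef]; ring
      have hA : Integrable (fun ω => Z ω ^ 2 - (2 * r) * (Z ω * g ω)) μ := by
        have : Integrable (fun ω => Z ω ^ 2) μ := by simpa [sq] using hZ.integrable_sq
        exact this.sub (hZg.const_mul (2 * r))
      have hB : Integrable (fun ω => r ^ 2 * g ω ^ 2) μ := hg2.const_mul (r ^ 2)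
      have hZ2' : Integrable (fun ω => Z ω ^ 2) μ := by simpa [sq] using hZ.integrable_sq
      rw [expand, integral_add hA hB, integral_sub hZ2' (hZg.const_mul (2 * r)),
        integral_const_mul, integral_const_mul]
    rw [hfun]
    have hB : (∫ ω, Z ω * g ω ∂μ) = ∫ ω, (Y ω - (μ[Y|m]) ω) * g ω ∂μ := by
      refine integral_congr_ae ?_
      filter_upwards [hEq] with ω h
      simp only [hZdef, h]
    have h1 : HasDerivAt (fun r : ℝ => (2 * r) * (∫ ω, Z ω * g ω ∂μ))
        (2 * (∫ ω, Z ω * g ω ∂μ)) 0 := by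
      simpa using ((hasDerivAt_id (0:ℝ)).const_mul 2).mul_const (∫ ω, Z ω * g ω ∂μ)
    have h2 : HasDerivAt (fun r : ℝ => r ^ 2 * (∫ ω, g ω ^ 2 ∂μ)) 0 0 := by
      simpa using (hasDerivAt_pow 2 (0:ℝ)).mul_const (∫ ω, g ω ^ 2 ∂μ)
    have hkey := (h1.const_sub (∫ ω, Z ω ^ 2 ∂μ)).add h2
    have hval : -(2 * ∫ ω, Z ω * g ω ∂μ) + 0
        = -2 * ∫ ω, (Y ω - (μ[Y|m]) ω) * g ω ∂μ := by rw [← hB]; ring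
    rw [← hval]
    exact hkey
end

section
/- Suboptimality bound for the offline IV bandit policy: let 𝒞 be a context space with test distribution ℙ_test, 𝒜 an action space, and {f_θ : 𝒞 × 𝒜 → ℝ} a parameterised family such that every f_θ attains a maximum over 𝒜 for each c. Let (θ̂_N) be a sequence of Θ-valued random vectors such that for every ζ ∈ (0,1] there exist M, K > 0 with ℙ(‖θ̂_N − θ₀‖ ≤ M·N^{−1/2}) ≥ 1 − ζ for all integers N ≥ K, and suppose ‖f_θ(c,a) − f_{θ₀}(c,a)‖ ≤ L·‖θ − θ₀‖ for all c in the support of ℙ_test, a ∈ 𝒜, θ ∈ Θ. Define the policies π̂_N(c) ∈ argmax_{a∈𝒜} f_{θ̂_N}(c,a) and π*(c) ∈ argmax_{a∈𝒜} f_{θ₀}(c,a), and the value V(π) = E_{c∼ℙ_test}[f_{θ₀}(c, π(c))]. Then for every ζ ∈ (0,1] there exist M', K' > 0 such that for all integers N ≥ K', ℙ(V(π*) − V(π̂_N) ≤ 2·L·M'·N^{−1/2}) ≥ 1 − ζ; that is, the suboptimality of π̂_N is O(L·N^{−1/2}) with probability 1 − ζ. -/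
open MeasureTheory ProbabilityTheory

/-- **Suboptimality bound for the offline IV bandit policy.**
If the parameter estimates `θhat N` converge to `θ₀` at rate `N^(-1/2)` with high
confidence and the reward family `f` is `L`-Lipschitz in the parameter (for contexts in
the support of the test distribution `Ptest`, uniformly over actions), then the greedy
policy `πhat N` derived from `f (θhat N)` has suboptimality at most `2·L·M'·N^(-1/2)`
with high confidence, where the value of a policy `π` is `V(π) = E_{c∼Ptest}[f θ₀ c (π c)]`
and `πstar` is a greedy policy for the true `f θ₀`. -/
theorem offline_iv_bandit_suboptimality
    {Ω : Type*} [MeasureSpace Ω] [IsProbabilityMeasure (ℙ : Measure Ω)]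
    {𝒞 𝒜 : Type*} [MeasurableSpace 𝒞]
    (Ptest : Measure 𝒞) [IsProbabilityMeasure Ptest]
    {d : ℕ} (Θ : Set (EuclideanSpace ℝ (Fin d))) (θ₀ : EuclideanSpace ℝ (Fin d))
    (hθ₀ : θ₀ ∈ Θ)
    (f : EuclideanSpace ℝ (Fin d) → 𝒞 → 𝒜 → ℝ)
    (θhat : ℕ → Ω → EuclideanSpace ℝ (Fin d))
    (hmem : ∀ N ω, θhat N ω ∈ Θ)
    (L : ℝ) (hL : 0 < L)
    (hLip : ∀ θ ∈ Θ, ∀ᵐ c ∂Ptest, ∀ a : 𝒜, |f θ c a - f θ₀ c a| ≤ L * ‖θ - θ₀‖)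
    (πhat : ℕ → Ω → 𝒞 → 𝒜) (πstar : 𝒞 → 𝒜)
    (hπhat : ∀ N ω c a, f (θhat N ω) c a ≤ f (θhat N ω) c (πhat N ω c))
    (hπstar : ∀ c a, f θ₀ c a ≤ f θ₀ c (πstar c))
    (hInt : ∀ π : 𝒞 → 𝒜, Integrable (fun c => f θ₀ c (π c)) Ptest)
    (hrate : ∀ ζ ∈ Set.Ioc (0:ℝ) 1, ∃ M K : ℝ, 0 < M ∧ 0 < K ∧
      ∀ N : ℕ, K ≤ (N : ℝ) →
        ENNReal.ofReal (1 - ζ) ≤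
          ℙ {ω | ‖θhat N ω - θ₀‖ ≤ M * (N : ℝ) ^ (-(1:ℝ)/2)}) :
    ∀ ζ ∈ Set.Ioc (0:ℝ) 1, ∃ M' K' : ℝ, 0 < M' ∧ 0 < K' ∧
      ∀ N : ℕ, K' ≤ (N : ℝ) →
        ENNReal.ofReal (1 - ζ) ≤
          ℙ {ω | (∫ c, f θ₀ c (πstar c) ∂Ptest) - ∫ c, f θ₀ c (πhat N ω c) ∂Ptest
              ≤ 2 * L * M' * (N : ℝ) ^ (-(1:ℝ)/2)} := by

  intro ζ hζ
  obtain ⟨M, K, hM, hK, hrate'⟩ := hrate ζ hζ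
  refine ⟨M, K, hM, hK, fun N hN => ?_⟩
  refine le_trans (hrate' N hN) (measure_mono ?_)
  intro ω hω
  simp only [Set.mem_setOf_eq] at hω ⊢
  set ε := M * (N : ℝ) ^ (-(1:ℝ)/2) with hε
  -- a.e. bound on the pointwise difference
  have hLip' := hLip (θhat N ω) (hmem N ω)
  have hptwise : ∀ᵐ c ∂Ptest,
      f θ₀ c (πstar c) - f θ₀ c (πhat N ω c) ≤ 2 * L * ε := by
    filter_upwards [hLip'] with c hc
    have h1 := hc (πstar c)
    have h2 := hc (πhat N ω c)
    have h3 := hπhat N ω c (πstar c)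
    have hLe : L * ‖θhat N ω - θ₀‖ ≤ L * ε :=
      mul_le_mul_of_nonneg_left hω hL.le
    have h1' : |f (θhat N ω) c (πstar c) - f θ₀ c (πstar c)| ≤ L * ε := h1.trans hLe
    have h2' : |f (θhat N ω) c (πhat N ω c) - f θ₀ c (πhat N ω c)| ≤ L * ε := h2.trans hLe
    rw [abs_le] at h1' h2'
    nlinarith [h1'.1, h1'.2, h2'.1, h2'.2]
  have hint1 := hInt πstar
  have hint2 := hInt (πhat N ω)
  have := integral_mono_ae (hint1.sub hint2) (integrable_const (2 * L * ε)) hptwise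
  simp only [Pi.sub_apply] at this
  rw [integral_sub hint1 hint2, integral_const, probReal_univ,
    one_smul] at this
  rw [hε] at this
  linarith [this]
end

section
/- Discounting inequality used in the optimality proof: for all real numbers γ ∈ (0,1], U ∈ (0,1] and τ ≥ 0, one has U·γ^τ / (1 − γ^τ·(1 − U)) ≥ γ^{τ/U}. Equivalently, setting x = γ^τ ∈ (0,1]: U·x + (1 − U)·x^{1 + 1/U} ≥ x^{1/U} for all x ∈ (0,1] and U ∈ (0,1]. (Note 1 − γ^τ(1−U) ≥ U > 0, so the left-hand side is well defined.) -/
open Real Set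

private lemma key_ineq (U x : ℝ) (hU : U ∈ Set.Ioc (0:ℝ) 1) (hx : x ∈ Set.Ioc (0:ℝ) 1) :
    x ^ ((1:ℝ) / U) ≤ U * x + (1 - U) * x ^ (1 + 1 / U) := by
  obtain ⟨hU0, hU1⟩ := hU
  obtain ⟨hx0, hx1⟩ := hx
  have h := Real.geom_mean_le_arith_mean2_weighted (w₁ := U) (w₂ := 1 - U)
    (p₁ := x) (p₂ := x ^ (1 + 1 / U)) hU0.le (by linarith)
    hx0.le (Real.rpow_nonneg hx0.le (1 + 1 / U)) (by ring)
  calc x ^ ((1:ℝ)/U) = x ^ U * (x ^ (1 + 1/U)) ^ (1 - U) := by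
        rw [← Real.rpow_mul hx0.le, ← Real.rpow_add hx0]
        congr 1
        field_simp
        ring
    _ ≤ U * x + (1 - U) * x ^ (1 + 1/U) := h

/-- **Discounting inequality used in the optimality proof.**
For all `γ, U ∈ (0,1]` and `τ ≥ 0`, one has `U·γ^τ / (1 − γ^τ·(1 − U)) ≥ γ^(τ/U)`;
equivalently, setting `x = γ^τ ∈ (0,1]`, `U·x + (1−U)·x^(1+1/U) ≥ x^(1/U)` for all
`x ∈ (0,1]` and `U ∈ (0,1]`.  (As noted, `1 − γ^τ(1−U) ≥ U > 0`, so the left-hand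
side of the first inequality is well defined.) -/
theorem discounting_inequality :
    (∀ γ U τ : ℝ, γ ∈ Set.Ioc (0:ℝ) 1 → U ∈ Set.Ioc (0:ℝ) 1 → 0 ≤ τ →
      γ ^ (τ / U) ≤ U * γ ^ τ / (1 - γ ^ τ * (1 - U))) ∧
    (∀ U x : ℝ, U ∈ Set.Ioc (0:ℝ) 1 → x ∈ Set.Ioc (0:ℝ) 1 →
      x ^ ((1:ℝ) / U) ≤ U * x + (1 - U) * x ^ (1 + 1 / U)) ∧
    (∀ γ U τ : ℝ, γ ∈ Set.Ioc (0:ℝ) 1 → U ∈ Set.Ioc (0:ℝ) 1 → 0 ≤ τ →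
      U ≤ 1 - γ ^ τ * (1 - U)) := by
  have h3 : ∀ γ U τ : ℝ, γ ∈ Set.Ioc (0:ℝ) 1 → U ∈ Set.Ioc (0:ℝ) 1 → 0 ≤ τ →
      U ≤ 1 - γ ^ τ * (1 - U) := by
    intro γ U τ hγ hU hτ
    have hx1 : γ ^ τ ≤ 1 := Real.rpow_le_one hγ.1.le hγ.2 hτ
    have hx0 : (0:ℝ) < γ ^ τ := Real.rpow_pos_of_pos hγ.1 τ
    nlinarith [hU.2]
  refine ⟨?_, key_ineq, h3⟩
  intro γ U τ hγ hU hτ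
  have hx : γ ^ τ ∈ Set.Ioc (0:ℝ) 1 :=
    ⟨Real.rpow_pos_of_pos hγ.1 τ, Real.rpow_le_one hγ.1.le hγ.2 hτ⟩
  have hden : 0 < 1 - γ ^ τ * (1 - U) := lt_of_lt_of_le hU.1 (h3 γ U τ hγ hU hτ)
  rw [le_div_iff₀ hden]
  have hkey := key_ineq U (γ ^ τ) hU hx
  have hrw : γ ^ (τ / U) = (γ ^ τ) ^ ((1:ℝ) / U) := by
    rw [← Real.rpow_mul hγ.1.le, mul_one_div]
  have hsplit : (γ ^ τ) ^ (1 + 1 / U) = γ ^ τ * (γ ^ τ) ^ ((1:ℝ) / U) := by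
    rw [Real.rpow_add hx.1, Real.rpow_one]
  rw [hsplit] at hkey
  rw [hrw]
  nlinarith [hkey]
end
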